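/- Let σ(s,t) = (1/π)(L(πs) + L(πt) + L(π(1-s-t))) for (s,t) in the closed triangle T̄, where L(x) = -∫₀ˣ log|2 sin z| dz. Then σ is continuous on T̄, vanishes on the boundary ∂T (i.e., σ(s,t) = 0 whenever s = 0, t = 0, or s + t = 1), is concave on T̄, and is nonnegative on T̄. -/

import Mathlib

open Real MeasureTheory intervalIntegral Set


/-- The Lobachevsky function `L(x) = -∫₀ˣ log|2 sin z| dz`. -/
noncomputable def lobachevsky (x : ℝ) : ℝ := -∫ z in (0 : ℝ)..x, Real.log |2 * Real.sin z|

/-- The lozenge surface tension `σ(s,t) = π⁻¹(L(πs) + L(πt) + L(π(1-s-t)))`. -/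
noncomputable def surfTension (q : ℝ × ℝ) : ℝ :=
  Real.pi⁻¹ * (lobachevsky (Real.pi * q.1) + lobachevsky (Real.pi * q.2) +
    lobachevsky (Real.pi * (1 - q.1 - q.2)))

/-- The closed triangle `T̄ = {(s,t) : s,t ≥ 0, s + t ≤ 1}`. -/
def Tbar : Set (ℝ × ℝ) := {q | 0 ≤ q.1 ∧ 0 ≤ q.2 ∧ q.1 + q.2 ≤ 1}

noncomputable def lsin (z : ℝ) : ℝ := Real.log |Real.sin z|

lemma lsin_meas : Measurable lsin := Real.measurable_log.comp measurable_sin.abs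

lemma neg_log_le (z : ℝ) (hz : 0 < z) : -Real.log z ≤ 2 * z ^ (-(1/2) : ℝ) := by
  have hy : (0:ℝ) < Real.sqrt z := Real.sqrt_pos.2 hz
  have h1 : Real.log (1 / Real.sqrt z) ≤ 1 / Real.sqrt z - 1 :=
    Real.log_le_sub_one_of_pos (by positivity)
  have h2 : Real.log (1 / Real.sqrt z) = - Real.log (Real.sqrt z) := by
    rw [one_div, Real.log_inv]
  have h3 : Real.log (Real.sqrt z) = Real.log z / 2 := Real.log_sqrt hz.le
  have h4 : z ^ (-(1/2) : ℝ) = 1 / Real.sqrt z := by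
    rw [Real.rpow_neg hz.le, one_div, Real.sqrt_eq_rpow]
    norm_num
  rw [h4]
  rw [h2, h3] at h1
  nlinarith [hy.le]

lemma lsin_int_half : IntervalIntegrable lsin volume 0 (π/2) := by
  have hbound : IntervalIntegrable (fun z : ℝ => Real.log (π/2) + 2 * z ^ (-(1/2) : ℝ))
      volume 0 (π/2) :=
    intervalIntegrable_const.add ((intervalIntegrable_rpow' (by norm_num)).const_mul 2)
  apply hbound.mono_fun lsin_meas.aestronglyMeasurable
  have hm : MeasurableSet (Set.uIoc (0:ℝ) (π/2)) := measurableSet_uIoc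
  filter_upwards [ae_restrict_mem hm] with z hz
  rw [Set.uIoc_of_le (by positivity)] at hz
  obtain ⟨h0, h1⟩ := hz
  have hs : 2 / π * z ≤ Real.sin z := Real.mul_le_sin h0.le h1
  have hs0 : (0:ℝ) < 2 / π * z := by positivity
  have hsin0 : 0 < Real.sin z := lt_of_lt_of_le hs0 hs
  have hsle : Real.sin z ≤ 1 := Real.sin_le_one z
  have hls : Real.log (Real.sin z) ≤ 0 := Real.log_nonpos hsin0.le hsle
  have h2 : ‖lsin z‖ = -Real.log (Real.sin z) := by
    rw [lsin, abs_of_pos hsin0, Real.norm_eq_abs, abs_of_nonpos hls]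
  rw [h2]
  have h5 : Real.log (2/π*z) ≤ Real.log (Real.sin z) := Real.log_le_log hs0 hs
  have h6 : Real.log (2/π*z) = Real.log (2/π) + Real.log z := Real.log_mul (by positivity) h0.ne'
  have h7 : Real.log (2/π) = - Real.log (π/2) := by
    rw [← Real.log_inv]; norm_num
  have h8 : -Real.log z ≤ 2 * z ^ (-(1/2) : ℝ) := neg_log_le z h0
  have hrp : (0:ℝ) ≤ 2 * z ^ (-(1/2) : ℝ) := by positivity
  have : ‖Real.log (π/2) + 2 * z ^ (-(1/2) : ℝ)‖ = Real.log (π/2) + 2 * z ^ (-(1/2) : ℝ) := by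
    rw [Real.norm_eq_abs, abs_of_nonneg]
    have : (0:ℝ) ≤ Real.log (π/2) := Real.log_nonneg (by nlinarith [Real.pi_gt_three])
    linarith
  rw [this]
  linarith

lemma lsin_reflect (x : ℝ) : lsin (π - x) = lsin x := by
  simp [lsin, Real.sin_pi_sub]

lemma lsin_periodic : Function.Periodic lsin π := by
  intro x; simp [lsin, Real.sin_add_pi]

lemma lsin_int_top : IntervalIntegrable lsin volume (π/2) π := by
  have h := (lsin_int_half.comp_sub_left π)
  have : (fun x => lsin (π - x)) = lsin := funext lsin_reflect
  rw [this] at h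
  have e1 : π - 0 = π := by ring
  have e2 : π - π/2 = π/2 := by ring
  rw [e1, e2] at h
  exact h.symm

lemma lsin_int_pi : IntervalIntegrable lsin volume 0 π := lsin_int_half.trans lsin_int_top

lemma lsin_int_shift (c : ℝ) (h : IntervalIntegrable lsin volume c (c + π)) :
    IntervalIntegrable lsin volume (c + π) (c + π + π) := by
  have h2 := h.comp_sub_right π
  have e : (fun x => lsin (x - π)) = lsin := by
    funext x
    have := lsin_periodic (x - π)
    simpa using this.symm
  rw [e] at h2
  convert h2 using 1 <;> ring

lemma lsin_int_nat : ∀ n : ℕ, IntervalIntegrable lsin volume (n*π) ((n+1)*π) := by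
  intro n
  induction n with
  | zero => simpa using lsin_int_pi
  | succ m ihm =>
    have h : IntervalIntegrable lsin volume (m*π) (m*π + π) := by
      convert ihm using 1; ring
    have := lsin_int_shift (m*π) h
    convert this using 1 <;> push_cast <;> ring

lemma lsin_neg_arg : (fun x : ℝ => lsin (-x)) = lsin := by
  funext x; simp [lsin]

lemma lsin_int_natm : ∀ n : ℕ, IntervalIntegrable lsin volume (-(n*π)) (n*π) := by
  intro n
  induction n with
  | zero => simp
  | succ m ih =>
    have h1 : IntervalIntegrable lsin volume (m*π) ((m+1)*π) := lsin_int_nat m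
    have h2 : IntervalIntegrable lsin volume (-((m+1)*π)) (-(m*π)) := by
      have h3 := (IntervalIntegrable.iff_comp_neg (by simp)).mp h1
      rw [lsin_neg_arg] at h3
      exact h3.symm
    have := h2.trans (ih.trans h1)
    convert this using 2 <;> push_cast <;> ring

lemma lsin_int (a b : ℝ) : IntervalIntegrable lsin volume a b := by
  obtain ⟨n, hn⟩ : ∃ n : ℕ, max |a| |b| ≤ n * π := by
    obtain ⟨n, hn⟩ := exists_nat_ge (max |a| |b| / π)
    exact ⟨n, by rw [div_le_iff₀ Real.pi_pos] at hn; linarith⟩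
  have ha : |a| ≤ n*π := le_trans (le_max_left _ _) hn
  have hb : |b| ≤ n*π := le_trans (le_max_right _ _) hn
  rw [abs_le] at ha hb
  apply (lsin_int_natm n).mono_set
  rw [Set.uIcc_subset_uIcc_iff_le]
  constructor
  · exact le_min (min_le_of_left_le ha.1) (min_le_of_left_le hb.1)
  · exact max_le (le_max_of_le_right ha.2) (le_max_of_le_right hb.2)

lemma sin_ae_ne : ∀ᵐ z : ℝ, Real.sin z ≠ 0 := by
  have hc : Set.Countable {z : ℝ | Real.sin z = 0} := by
    have he : {z : ℝ | Real.sin z = 0} = Set.range (fun n : ℤ => (n:ℝ) * π) := by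
      ext z; simp [Real.sin_eq_zero_iff, Set.mem_range]
    rw [he]; exact Set.countable_range _
  have := hc.measure_zero volume
  rw [ae_iff]; simpa using this

lemma l2sin_ae : (fun z => Real.log 2 + lsin z) =ᵐ[volume] (fun z => Real.log |2 * Real.sin z|) := by
  filter_upwards [sin_ae_ne] with z hz
  rw [abs_mul, Real.log_mul (by simp [abs_ne_zero]) (abs_ne_zero.2 hz)]
  simp [lsin]

lemma l2sin_int (a b : ℝ) : IntervalIntegrable (fun z => Real.log |2 * Real.sin z|) volume a b := by
  have h : IntervalIntegrable (fun z => Real.log 2 + lsin z) volume a b :=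
    intervalIntegrable_const.add (lsin_int a b)
  exact ⟨h.1.congr (ae_restrict_of_ae l2sin_ae), h.2.congr (ae_restrict_of_ae l2sin_ae)⟩

lemma lob_eq (x : ℝ) : lobachevsky x = -(Real.log 2 * x) - ∫ z in (0:ℝ)..x, lsin z := by
  rw [lobachevsky]
  have h1 : (∫ z in (0:ℝ)..x, Real.log |2 * Real.sin z|)
      = ∫ z in (0:ℝ)..x, (Real.log 2 + lsin z) :=
    intervalIntegral.integral_congr_ae (l2sin_ae.symm.mono fun x hx _ => hx)
  rw [h1, intervalIntegral.integral_add intervalIntegrable_const (lsin_int 0 x)]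
  simp [mul_comm]
  ring

-- J and I values
lemma cos_eq_sin (u : ℝ) : Real.log |Real.cos u| = lsin (π/2 - u) := by
  rw [lsin, Real.sin_pi_div_two_sub]

lemma lcos_int : IntervalIntegrable (fun u => Real.log |Real.cos u|) volume 0 (π/2) := by
  have h := (lsin_int 0 (π/2)).comp_sub_left (π/2)
  simp only [← cos_eq_sin] at h
  simpa using h.symm

lemma J_eq : ∫ u in (0:ℝ)..(π/2), Real.log |Real.cos u| = ∫ u in (0:ℝ)..(π/2), lsin u := by
  simp only [cos_eq_sin]
  rw [intervalIntegral.integral_comp_sub_left lsin (π/2)]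
  norm_num

lemma I_eq_2J : (∫ z in (0:ℝ)..π, lsin z) = 2 * ∫ u in (0:ℝ)..(π/2), lsin u := by
  have hs : (∫ z in (π/2:ℝ)..π, lsin z) = ∫ u in (0:ℝ)..(π/2), lsin u := by
    have := intervalIntegral.integral_comp_sub_left lsin π (a := 0) (b := π/2)
    simp only [lsin_reflect] at this
    rw [show π - π/2 = π/2 by ring, sub_zero] at this
    exact this.symm
  rw [← intervalIntegral.integral_add_adjacent_intervals lsin_int_half lsin_int_top, hs]
  ring

lemma I_val : (∫ z in (0:ℝ)..π, lsin z) = -(π * Real.log 2) := by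
  have hdouble : (∫ u in (0:ℝ)..(π/2), lsin (2*u)) = 2⁻¹ * ∫ z in (0:ℝ)..π, lsin z := by
    rw [intervalIntegral.integral_comp_mul_left lsin (two_ne_zero)]
    rw [show (2:ℝ) * (π/2) = π by ring, mul_zero]
    simp
  have hsplit : (∫ u in (0:ℝ)..(π/2), lsin (2*u))
      = ∫ u in (0:ℝ)..(π/2), (Real.log 2 + lsin u + Real.log |Real.cos u|) := by
    apply intervalIntegral.integral_congr_ae
    have hcae : ∀ᵐ u : ℝ, Real.cos u ≠ 0 := by
      have hc : Set.Countable {u : ℝ | Real.cos u = 0} := by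
        have he : {u : ℝ | Real.cos u = 0} = Set.range (fun k : ℤ => (2*(k:ℝ)+1) * π/2) := by
          ext u
          simp only [Set.mem_setOf_eq, Set.mem_range]
          rw [Real.cos_eq_zero_iff]
          constructor
          · rintro ⟨k, hk⟩; exact ⟨k, hk.symm⟩
          · rintro ⟨k, hk⟩; exact ⟨k, hk.symm⟩
        rw [he]; exact Set.countable_range _
      have := hc.measure_zero volume
      rw [ae_iff]; simpa using this
    have hae : ∀ᵐ u : ℝ, Real.sin u ≠ 0 ∧ Real.cos u ≠ 0 := sin_ae_ne.and hcae
    filter_upwards [hae] with u ⟨hsu, hcu⟩ _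
    rw [lsin, Real.sin_two_mul, lsin]
    rw [abs_mul, abs_mul, Real.log_mul (by positivity) (abs_ne_zero.2 hcu),
      Real.log_mul (by simp) (abs_ne_zero.2 hsu)]
    rw [show |(2:ℝ)| = 2 from abs_two]
    try ring
  have hI : (∫ u in (0:ℝ)..(π/2), (Real.log 2 + lsin u + Real.log |Real.cos u|))
      = (π/2) * Real.log 2 + (∫ u in (0:ℝ)..(π/2), lsin u) + ∫ u in (0:ℝ)..(π/2), Real.log |Real.cos u| := by
    rw [intervalIntegral.integral_add (intervalIntegrable_const.add lsin_int_half) lcos_int,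
      intervalIntegral.integral_add intervalIntegrable_const lsin_int_half]
    simp [mul_comm]
  have h2J := I_eq_2J
  rw [hsplit, hI, J_eq] at hdouble
  have hJ : (∫ u in (0:ℝ)..(π/2), lsin u) = -(π/2) * Real.log 2 := by linarith
  rw [h2J, hJ]; ring

noncomputable def ld (w : ℝ) : ℝ := -Real.log (2 * Real.sin w)

lemma lob_hasDerivAt {x : ℝ} (hx : x ∈ Set.Ioo 0 π) :
    HasDerivAt lobachevsky (ld x) x := by
  have hsin : 0 < Real.sin x := Real.sin_pos_of_pos_of_lt_pi hx.1 hx.2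
  have hne : |2 * Real.sin x| ≠ 0 := by positivity
  have hcont : ContinuousAt (fun z => Real.log |2 * Real.sin z|) x :=
    (((continuous_const.mul continuous_sin).abs).continuousAt).log hne
  have hmeas : StronglyMeasurableAtFilter (fun z => Real.log |2 * Real.sin z|) (nhds x) :=
    ⟨Set.univ, Filter.univ_mem,
      ((Real.measurable_log.comp (measurable_sin.const_mul 2).abs).aestronglyMeasurable).restrict⟩
  have h := intervalIntegral.integral_hasDerivAt_right (l2sin_int 0 x) hmeas hcont
  have h2 := h.neg
  have he : -Real.log |2 * Real.sin x| = ld x := by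
    rw [abs_of_pos (by positivity), ld]
  rw [he] at h2
  exact h2

lemma ld_hasDerivAt {w : ℝ} (hw : w ∈ Set.Ioo 0 π) :
    HasDerivAt ld (-(Real.cos w / Real.sin w)) w := by
  have hsin : 0 < Real.sin w := Real.sin_pos_of_pos_of_lt_pi hw.1 hw.2
  have h1 : HasDerivAt (fun z => 2 * Real.sin z) (2 * Real.cos w) w :=
    (Real.hasDerivAt_sin w).const_mul 2
  have h2 := (h1.log (by positivity)).neg
  rw [mul_div_mul_left _ _ two_ne_zero] at h2
  exact h2

lemma cot_ineq {A B : ℝ} (u v : ℝ) (hA0 : 0 < A) (hB0 : 0 < B) (hAB : A + B < π) :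
    0 ≤ u^2 * (Real.cos A / Real.sin A) + v^2 * (Real.cos B / Real.sin B)
      + (u+v)^2 * (Real.cos (π - A - B) / Real.sin (π - A - B)) := by
  have hsa : 0 < Real.sin A := Real.sin_pos_of_pos_of_lt_pi hA0 (by linarith)
  have hsb : 0 < Real.sin B := Real.sin_pos_of_pos_of_lt_pi hB0 (by linarith)
  have hsc : 0 < Real.sin (A + B) := Real.sin_pos_of_pos_of_lt_pi (by linarith) hAB
  have hC1 : Real.sin (π - A - B) = Real.sin (A + B) := by
    rw [show π - A - B = π - (A+B) by ring, Real.sin_pi_sub]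
  have hC2 : Real.cos (π - A - B) = -Real.cos (A + B) := by
    rw [show π - A - B = π - (A+B) by ring, Real.cos_pi_sub]
  rw [hC1, hC2]
  rw [Real.sin_add] at hsc ⊢
  rw [Real.cos_add]
  have key : u^2 * (Real.cos A / Real.sin A) + v^2 * (Real.cos B / Real.sin B)
      + (u+v)^2 * (-(Real.cos A * Real.cos B - Real.sin A * Real.sin B) /
          (Real.sin A * Real.cos B + Real.cos A * Real.sin B))
      = ((u * Real.cos A * Real.sin B - v * Real.sin A * Real.cos B)^2
          + ((u+v) * Real.sin A * Real.sin B)^2)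
        / (Real.sin A * Real.sin B * (Real.sin A * Real.cos B + Real.cos A * Real.sin B)) := by
    field_simp
    ring
  rw [key]
  positivity

lemma lob_continuous : Continuous lobachevsky := by
  have h := intervalIntegral.continuous_primitive l2sin_int 0
  exact h.neg

lemma surf_continuous : Continuous surfTension := by
  unfold surfTension
  exact continuous_const.mul
    (((lob_continuous.comp (continuous_const.mul continuous_fst)).add
      (lob_continuous.comp (continuous_const.mul continuous_snd))).add
      (lob_continuous.comp (continuous_const.mul
        ((continuous_const.sub continuous_fst).sub continuous_snd))))

lemma lob_zero : lobachevsky 0 = 0 := by simp [lobachevsky]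

lemma lob_pi : lobachevsky π = 0 := by rw [lob_eq, I_val]; ring

lemma lob_reflect (x : ℝ) : lobachevsky (π - x) = - lobachevsky x := by
  rw [lob_eq, lob_eq]
  have hsplit : (∫ z in (0:ℝ)..(π - x), lsin z)
      = (∫ z in (0:ℝ)..π, lsin z) + ∫ z in π..(π - x), lsin z :=
    (intervalIntegral.integral_add_adjacent_intervals (lsin_int 0 π) (lsin_int π (π - x))).symm
  have hrefl : (∫ z in π..(π - x), lsin z) = -∫ z in (0:ℝ)..x, lsin z := by
    have h := intervalIntegral.integral_comp_sub_left lsin π (a := 0) (b := x)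
    simp only [lsin_reflect] at h
    rw [sub_zero] at h
    rw [intervalIntegral.integral_symm, ← h]
  rw [hsplit, hrefl, I_val]
  ring

lemma surf_boundary (q : ℝ × ℝ) (h : q.1 = 0 ∨ q.2 = 0 ∨ q.1 + q.2 = 1) :
    surfTension q = 0 := by
  unfold surfTension
  rcases h with h | h | h
  · rw [h, show π * (1 - 0 - q.2) = π - π * q.2 by ring, lob_reflect]
    simp [lob_zero]
  · rw [h, show π * (1 - q.1 - 0) = π - π * q.1 by ring, lob_reflect]
    simp [lob_zero]
  · rw [show π * (1 - q.1 - q.2) = 0 by rw [show (1:ℝ) - q.1 - q.2 = 0 by linarith]; ring,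
      show π * q.2 = π - π * q.1 by rw [show q.2 = 1 - q.1 by linarith]; ring, lob_reflect]
    simp [lob_zero]

lemma aff_deriv (p k c : ℝ) : HasDerivAt (fun c => π * (p + c * k)) (π * k) c := by
  simpa using (((hasDerivAt_id c).mul_const k).const_add p).const_mul π

lemma lob_comp_deriv {p k : ℝ} (c : ℝ) (h : π * (p + c * k) ∈ Set.Ioo 0 π) :
    HasDerivAt (fun c => lobachevsky (π * (p + c * k))) (ld (π * (p + c * k)) * (π * k)) c :=
  (lob_hasDerivAt h).comp (h₂ := lobachevsky) c (aff_deriv p k c)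

lemma ld_comp_deriv {p k : ℝ} (c : ℝ) (h : π * (p + c * k) ∈ Set.Ioo 0 π) :
    HasDerivAt (fun c => ld (π * (p + c * k)))
      (-(Real.cos (π * (p + c * k)) / Real.sin (π * (p + c * k))) * (π * k)) c :=
  (ld_hasDerivAt h).comp (h₂ := ld) c (aff_deriv p k c)

lemma combo_pos {a b c : ℝ} (ha : 0 ≤ a) (hb : 0 ≤ b) (h : ¬(a = 0 ∧ b = 0))
    (hc : 0 < c) (hc1 : c < 1) : 0 < (1 - c) * a + c * b := by
  rcases ha.lt_or_eq with ha' | ha'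
  · nlinarith
  · have hb' : 0 < b := by
      rcases hb.lt_or_eq with hb' | hb'
      · exact hb'
      · exact absurd ⟨ha'.symm, hb'.symm⟩ h
    nlinarith

lemma seg_concave (x y : ℝ × ℝ) (hx : x ∈ Tbar) (hy : y ∈ Tbar) :
    ConcaveOn ℝ (Set.Icc (0:ℝ) 1) (fun c => surfTension ((1-c) • x + c • y)) := by
  obtain ⟨hx1, hx2, hx3⟩ := hx
  obtain ⟨hy1, hy2, hy3⟩ := hy
  -- combo membership and zero cases
  have hcombo : ∀ c ∈ Set.Icc (0:ℝ) 1, ((1-c) • x + c • y) ∈ Tbar := by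
    intro c hc
    obtain ⟨hc0, hc1⟩ := hc
    refine ⟨?_, ?_, ?_⟩ <;> simp only [Prod.fst_add, Prod.snd_add, Prod.smul_fst,
      Prod.smul_snd, smul_eq_mul] <;> nlinarith
  by_cases hA : x.1 = 0 ∧ y.1 = 0
  · refine ⟨convex_Icc 0 1, ?_⟩
    have hzero : ∀ c ∈ Set.Icc (0:ℝ) 1, surfTension ((1-c) • x + c • y) = 0 := by
      intro c hc
      apply surf_boundary
      left
      simp [Prod.fst_add, Prod.smul_fst, smul_eq_mul, hA.1, hA.2]
    intro u hu w hw a b ha hb hab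
    dsimp only
    rw [hzero u hu, hzero w hw, hzero _ ((convex_Icc 0 1) hu hw ha hb hab)]
    simp
  by_cases hB : x.2 = 0 ∧ y.2 = 0
  · refine ⟨convex_Icc 0 1, ?_⟩
    have hzero : ∀ c ∈ Set.Icc (0:ℝ) 1, surfTension ((1-c) • x + c • y) = 0 := by
      intro c hc
      apply surf_boundary
      right; left
      simp [Prod.snd_add, Prod.smul_snd, smul_eq_mul, hB.1, hB.2]
    intro u hu w hw a b ha hb hab
    dsimp only
    rw [hzero u hu, hzero w hw, hzero _ ((convex_Icc 0 1) hu hw ha hb hab)]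
    simp
  by_cases hC : x.1 + x.2 = 1 ∧ y.1 + y.2 = 1
  · refine ⟨convex_Icc 0 1, ?_⟩
    have hzero : ∀ c ∈ Set.Icc (0:ℝ) 1, surfTension ((1-c) • x + c • y) = 0 := by
      intro c hc
      apply surf_boundary
      right; right
      simp only [Prod.fst_add, Prod.snd_add, Prod.smul_fst, Prod.smul_snd, smul_eq_mul]
      linear_combination (1-c) * hC.1 + c * hC.2
    intro u hu w hw a b ha hb hab
    dsimp only
    rw [hzero u hu, hzero w hw, hzero _ ((convex_Icc 0 1) hu hw ha hb hab)]
    simp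
  -- main case
  have hFeq : (fun c => surfTension ((1-c) • x + c • y))
      = fun c => π⁻¹ * ((lobachevsky (π * (x.1 + c * (y.1 - x.1))) + lobachevsky (π * (x.2 + c * (y.2 - x.2))))
          + lobachevsky (π * ((1 - x.1 - x.2) + c * (-(y.1 - x.1) - (y.2 - x.2))))) := by
    funext c
    have e1 : π * ((1-c) • x + c • y).1 = π * (x.1 + c * (y.1 - x.1)) := by
      simp only [Prod.fst_add, Prod.smul_fst, smul_eq_mul]; ring
    have e2 : π * ((1-c) • x + c • y).2 = π * (x.2 + c * (y.2 - x.2)) := by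
      simp only [Prod.snd_add, Prod.smul_snd, smul_eq_mul]; ring
    have e3 : π * (1 - ((1-c) • x + c • y).1 - ((1-c) • x + c • y).2) = π * ((1 - x.1 - x.2) + c * (-(y.1 - x.1) - (y.2 - x.2))) := by
      simp only [Prod.fst_add, Prod.snd_add, Prod.smul_fst, Prod.smul_snd, smul_eq_mul]; ring
    rw [surfTension, e1, e2, e3]
  rw [hFeq]
  -- interior membership facts
  have hmem : ∀ c ∈ Set.Ioo (0:ℝ) 1,
      (0 < x.1 + c * (y.1 - x.1) ∧ 0 < x.2 + c * (y.2 - x.2) ∧ 0 < (1 - x.1 - x.2) + c * (-(y.1 - x.1) - (y.2 - x.2))) := by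
    intro c hc
    refine ⟨?_, ?_, ?_⟩
    · have := combo_pos hx1 hy1 hA hc.1 hc.2
      nlinarith
    · have := combo_pos hx2 hy2 hB hc.1 hc.2
      nlinarith
    · have h3 : ¬(1 - x.1 - x.2 = 0 ∧ 1 - y.1 - y.2 = 0) := by
        intro ⟨ha, hb⟩; exact hC ⟨by linarith, by linarith⟩
      have := combo_pos (by linarith : (0:ℝ) ≤ 1 - x.1 - x.2)
        (by linarith : (0:ℝ) ≤ 1 - y.1 - y.2) h3 hc.1 hc.2
      nlinarith
  have hmemIoo : ∀ c ∈ Set.Ioo (0:ℝ) 1,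
      π * (x.1 + c * (y.1 - x.1)) ∈ Set.Ioo 0 π ∧ π * (x.2 + c * (y.2 - x.2)) ∈ Set.Ioo 0 π ∧
      π * ((1 - x.1 - x.2) + c * (-(y.1 - x.1) - (y.2 - x.2))) ∈ Set.Ioo 0 π := by
    intro c hc
    obtain ⟨h1, h2, h3⟩ := hmem c hc
    have hsum : (x.1 + c * (y.1 - x.1)) + (x.2 + c * (y.2 - x.2)) + ((1 - x.1 - x.2) + c * (-(y.1 - x.1) - (y.2 - x.2))) = 1 := by
      ring
    have hpi := Real.pi_pos
    refine ⟨⟨by positivity, by nlinarith⟩, ⟨by positivity, by nlinarith⟩,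
      ⟨by positivity, by nlinarith⟩⟩
  apply concaveOn_of_hasDerivWithinAt2_nonpos (convex_Icc 0 1)
    (f' := fun c => π⁻¹ * ((ld (π * (x.1 + c * (y.1 - x.1))) * (π * (y.1 - x.1)) + ld (π * (x.2 + c * (y.2 - x.2))) * (π * (y.2 - x.2)))
      + ld (π * ((1 - x.1 - x.2) + c * (-(y.1 - x.1) - (y.2 - x.2)))) * (π * (-(y.1 - x.1) - (y.2 - x.2)))))
    (f'' := fun c => π⁻¹ *
      ((-(Real.cos (π * (x.1 + c * (y.1 - x.1))) / Real.sin (π * (x.1 + c * (y.1 - x.1)))) * (π * (y.1 - x.1)) * (π * (y.1 - x.1))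
        + -(Real.cos (π * (x.2 + c * (y.2 - x.2))) / Real.sin (π * (x.2 + c * (y.2 - x.2)))) * (π * (y.2 - x.2)) * (π * (y.2 - x.2)))
        + -(Real.cos (π * ((1 - x.1 - x.2) + c * (-(y.1 - x.1) - (y.2 - x.2)))) / Real.sin (π * ((1 - x.1 - x.2) + c * (-(y.1 - x.1) - (y.2 - x.2))))) * (π * (-(y.1 - x.1) - (y.2 - x.2))) * (π * (-(y.1 - x.1) - (y.2 - x.2)))))
  · -- continuity
    apply Continuous.continuousOn
    have haffc : ∀ p k : ℝ, Continuous (fun c : ℝ => π * (p + c * k)) := by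
      intro p k
      exact continuous_const.mul (continuous_const.add (continuous_id.mul continuous_const))
    exact continuous_const.mul (((lob_continuous.comp (haffc x.1 (y.1 - x.1))).add
      (lob_continuous.comp (haffc x.2 (y.2 - x.2)))).add (lob_continuous.comp (haffc (1 - x.1 - x.2) (-(y.1 - x.1) - (y.2 - x.2)))))
  · rw [interior_Icc]
    intro c hc
    obtain ⟨h1, h2, h3⟩ := hmemIoo c hc
    exact ((((lob_comp_deriv c h1).add (lob_comp_deriv c h2)).add
      (lob_comp_deriv c h3)).const_mul π⁻¹).hasDerivWithinAt
  · rw [interior_Icc]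
    intro c hc
    obtain ⟨h1, h2, h3⟩ := hmemIoo c hc
    exact (((((ld_comp_deriv c h1).mul_const (π * (y.1 - x.1))).add
      ((ld_comp_deriv c h2).mul_const (π * (y.2 - x.2)))).add
      ((ld_comp_deriv c h3).mul_const (π * (-(y.1 - x.1) - (y.2 - x.2))))).const_mul π⁻¹).hasDerivWithinAt
  · rw [interior_Icc]
    intro c hc
    obtain ⟨hm1, hm2, hm3⟩ := hmem c hc
    have hsum : (x.1 + c * (y.1 - x.1)) + (x.2 + c * (y.2 - x.2)) + ((1 - x.1 - x.2) + c * (-(y.1 - x.1) - (y.2 - x.2))) = 1 := by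
      ring
    set A := π * (x.1 + c * (y.1 - x.1)) with hA_def
    set B := π * (x.2 + c * (y.2 - x.2)) with hB_def
    have hpi := Real.pi_pos
    have hA0 : 0 < A := by rw [hA_def]; positivity
    have hB0 : 0 < B := by rw [hB_def]; positivity
    have hAB : A + B < π := by rw [hA_def, hB_def]; nlinarith
    have hCarg : π * ((1 - x.1 - x.2) + c * (-(y.1 - x.1) - (y.2 - x.2))) = π - A - B := by rw [hA_def, hB_def]; nlinarith
    rw [hCarg]
    have hkey := cot_ineq (y.1 - x.1) (y.2 - x.2) hA0 hB0 hAB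
    have hK : (0:ℝ) ≤ π^2 * ((y.1 - x.1)^2 * (Real.cos A / Real.sin A)
        + (y.2 - x.2)^2 * (Real.cos B / Real.sin B)
        + ((y.1 - x.1)+(y.2 - x.2))^2 * (Real.cos (π - A - B) / Real.sin (π - A - B))) :=
      mul_nonneg (sq_nonneg π) hkey
    have heq : -(Real.cos A / Real.sin A) * (π * (y.1 - x.1)) * (π * (y.1 - x.1))
        + -(Real.cos B / Real.sin B) * (π * (y.2 - x.2)) * (π * (y.2 - x.2))
        + -(Real.cos (π - A - B) / Real.sin (π - A - B)) * (π * (-(y.1 - x.1) - (y.2 - x.2)))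
          * (π * (-(y.1 - x.1) - (y.2 - x.2)))
        = -(π^2 * ((y.1 - x.1)^2 * (Real.cos A / Real.sin A)
        + (y.2 - x.2)^2 * (Real.cos B / Real.sin B)
        + ((y.1 - x.1)+(y.2 - x.2))^2 * (Real.cos (π - A - B) / Real.sin (π - A - B)))) := by
      ring
    rw [heq]
    exact mul_nonpos_of_nonneg_of_nonpos (by positivity) (neg_nonpos.2 hK)

lemma tbar_convex : Convex ℝ Tbar := by
  intro p hp q hq a b ha hb hab
  obtain ⟨hp1, hp2, hp3⟩ := hp
  obtain ⟨hq1, hq2, hq3⟩ := hq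
  refine ⟨?_, ?_, ?_⟩ <;> simp only [Prod.fst_add, Prod.snd_add, Prod.smul_fst,
    Prod.smul_snd, smul_eq_mul] <;> nlinarith

lemma surf_concave : ConcaveOn ℝ Tbar surfTension := by
  refine ⟨tbar_convex, ?_⟩
  intro p hp q hq a b ha hb hab
  have hseg := seg_concave p q hp hq
  have h0 : (0:ℝ) ∈ Set.Icc (0:ℝ) 1 := ⟨le_refl 0, zero_le_one⟩
  have h1 : (1:ℝ) ∈ Set.Icc (0:ℝ) 1 := ⟨zero_le_one, le_refl 1⟩
  have h := hseg.2 h0 h1 ha hb hab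
  dsimp only at h
  have eb : a • (0:ℝ) + b • (1:ℝ) = b := by simp
  rw [eb] at h
  have e0 : (1-(0:ℝ)) • p + (0:ℝ) • q = p := by simp
  have e1 : (1-(1:ℝ)) • p + (1:ℝ) • q = q := by simp
  rw [e0, e1] at h
  have e2 : (1 - b) • p + b • q = a • p + b • q := by
    rw [show (1:ℝ) - b = a by linarith]
  rw [e2] at h
  exact h

lemma surf_nonneg (q : ℝ × ℝ) (hq : q ∈ Tbar) : 0 ≤ surfTension q := by
  obtain ⟨h1, h2, h3⟩ := hq
  by_cases hm : q.1 + q.2 = 0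
  · have hq1 : q.1 = 0 := by linarith
    rw [surf_boundary q (Or.inl hq1)]
  · have hm0 : 0 < q.1 + q.2 := lt_of_le_of_ne (by linarith) (Ne.symm hm)
    set m := q.1 + q.2 with hm_def
    set p : ℝ × ℝ := (q.1/m, q.2/m) with hp_def
    have hp : p ∈ Tbar := by
      refine ⟨by positivity, by positivity, ?_⟩
      rw [hp_def]
      simp only
      rw [← add_div, hm_def, div_self hm]
    have hps : p.1 + p.2 = 1 := by
      rw [hp_def]; simp only
      rw [← add_div, hm_def, div_self hm]
    have hO : ((0:ℝ), (0:ℝ)) ∈ Tbar := ⟨le_refl 0, le_refl 0, by norm_num⟩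
    have h := surf_concave.2 hp hO (le_of_lt hm0) (by linarith : (0:ℝ) ≤ 1 - m)
      (by ring : m + (1 - m) = 1)
    have harg : m • p + (1-m) • ((0:ℝ), (0:ℝ)) = q := by
      rw [hp_def]
      apply Prod.ext <;> simp <;> field_simp
    rw [harg, surf_boundary p (Or.inr (Or.inr hps)),
      surf_boundary ((0:ℝ),(0:ℝ)) (Or.inl rfl)] at h
    simpa using h

/-- The surface tension `σ` is continuous on `T̄`, vanishes on the boundary of the triangle,
is concave on `T̄`, and is nonnegative on `T̄`. -/
theorem stmt12 :
    ContinuousOn surfTension Tbar ∧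
    (∀ q ∈ Tbar, (q.1 = 0 ∨ q.2 = 0 ∨ q.1 + q.2 = 1) → surfTension q = 0) ∧
    ConcaveOn ℝ Tbar surfTension ∧
    (∀ q ∈ Tbar, 0 ≤ surfTension q) :=
  ⟨surf_continuous.continuousOn, fun q _ h => surf_boundary q h, surf_concave,
    fun q hq => surf_nonneg q hq⟩
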